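/- The transformed system μ̇1 = −μ2μ3 + εμ2u2 − ε²μ2μ3, μ̇2 = μ1μ3 − εμ1u2 + ε²μ1μ3, μ̇3 = −μ1μ2, u̇1 = −u2 + εμ3, u̇2 = u1 is Hamiltonian with respect to {·,·}_2 with Hamiltonian H^ε = ½(μ1² + 2μ2² + μ3² + u1² + u2² − 2εμ3u2 + ε²μ3²); that is, each component of the vector field equals {coordinate, H^ε}_2. -/

import Mathlib

noncomputable def pd (i : Fin 5) (f : (Fin 5 → ℝ) → ℝ) (x : Fin 5 → ℝ) : ℝ :=
  fderiv ℝ f x (Pi.single i 1)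

noncomputable def bracket2 (f g : (Fin 5 → ℝ) → ℝ) (x : Fin 5 → ℝ) : ℝ :=
  x 0 * (pd 1 f x * pd 2 g x - pd 2 f x * pd 1 g x)
  + x 1 * (pd 2 f x * pd 0 g x - pd 0 f x * pd 2 g x)
  + pd 4 f x * pd 3 g x - pd 3 f x * pd 4 g x

noncomputable def Heps (ε : ℝ) (y : Fin 5 → ℝ) : ℝ :=
  (1/2) * ((y 0)^2 + 2*(y 1)^2 + (y 2)^2 + (y 3)^2 + (y 4)^2
    - 2*ε*(y 2)*(y 4) + ε^2*(y 2)^2)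

noncomputable def P (i : Fin 5) : ((Fin 5 → ℝ) →L[ℝ] ℝ) := ContinuousLinearMap.proj i

lemma hP (i : Fin 5) (x : Fin 5 → ℝ) :
    HasFDerivAt (fun y : Fin 5 → ℝ => y i) (P i) x := (P i).hasFDerivAt

lemma pd_coord (i j : Fin 5) (x : Fin 5 → ℝ) :
    pd i (fun y => y j) x = if j = i then 1 else 0 := by
  unfold pd
  rw [(hP j x).fderiv]
  simp [P, Pi.single_apply]

lemma pdH (ε : ℝ) (x : Fin 5 → ℝ) :
    pd 0 (Heps ε) x = x 0 ∧ pd 1 (Heps ε) x = 2 * x 1 ∧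
    pd 2 (Heps ε) x = x 2 - ε * x 4 + ε^2 * x 2 ∧
    pd 3 (Heps ε) x = x 3 ∧ pd 4 (Heps ε) x = x 4 - ε * x 2 := by
  have e : Heps ε = fun y : Fin 5 → ℝ => (1/2) * (y 0 * y 0 + 2*(y 1 * y 1) + y 2 * y 2
      + y 3 * y 3 + y 4 * y 4 - (2*ε)*(y 2) * y 4 + ε^2*(y 2 * y 2)) := by
    funext y; unfold Heps; ring
  have H : HasFDerivAt (fun y : Fin 5 → ℝ => (1/2) * (y 0 * y 0 + 2*(y 1 * y 1) + y 2 * y 2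
        + y 3 * y 3 + y 4 * y 4 - (2*ε)*(y 2) * y 4 + ε^2*(y 2 * y 2))) _ x :=
    ((((((((hP 0 x).mul (hP 0 x)).add (((hP 1 x).mul (hP 1 x)).const_mul 2)).add
      ((hP 2 x).mul (hP 2 x))).add ((hP 3 x).mul (hP 3 x))).add ((hP 4 x).mul (hP 4 x))).sub
      (((hP 2 x).const_mul (2*ε)).mul (hP 4 x))).add
      (((hP 2 x).mul (hP 2 x)).const_mul (ε^2))).const_mul (1/2)
  refine ⟨?_, ?_, ?_, ?_, ?_⟩ <;>
    (unfold pd; rw [e, H.fderiv]; simp [P, Pi.single_apply]; ring)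

theorem transformed_hamiltonian_bracket2 (ε : ℝ) :
    ∀ x : Fin 5 → ℝ,
      bracket2 (fun y => y 0) (Heps ε) x
        = -(x 1 * x 2) + ε * x 1 * x 4 - ε^2 * x 1 * x 2 ∧
      bracket2 (fun y => y 1) (Heps ε) x
        = x 0 * x 2 - ε * x 0 * x 4 + ε^2 * x 0 * x 2 ∧
      bracket2 (fun y => y 2) (Heps ε) x = -(x 0 * x 1) ∧
      bracket2 (fun y => y 3) (Heps ε) x = -(x 4) + ε * x 2 ∧
      bracket2 (fun y => y 4) (Heps ε) x = x 3 := by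
  intro x
  obtain ⟨h0, h1, h2, h3, h4⟩ := pdH ε x
  refine ⟨?_, ?_, ?_, ?_, ?_⟩ <;>
    (unfold bracket2; rw [h0, h1, h2, h3, h4]; simp [pd_coord]; all_goals ring)
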